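/- Let K be a field of arbitrary characteristic and R = K[x_1,…,x_n]. For every r ≥ 1, the Euler operators satisfy the relation E_1 ∘ E_r = (r+1)·E_{r+1} + r·E_r as K-linear endomorphisms of R. -/

import Mathlib

/-- The divided-power partial derivative `∂_i^{[j]}` on `K[x_1,…,x_n]`, determined on
monomials by `∂_i^{[j]}(x^a) = binom(a_i, j) • x^{a - j·e_i}` (zero when `a_i < j`). -/
noncomputable def dpDeriv (K : Type*) [CommRing K] {n : ℕ} (i : Fin n) (j : ℕ) :
    MvPolynomial (Fin n) K →ₗ[K] MvPolynomial (Fin n) K :=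
  (Finsupp.lsum K fun a : Fin n →₀ ℕ =>
    (((a i).choose j : K)) •
      (MvPolynomial.monomial (a - Finsupp.single i j) : K →ₗ[K] MvPolynomial (Fin n) K))
    ∘ₗ (AddMonoidAlgebra.coeffLinearEquiv K).toLinearMap

/-- The `r`-th Euler operator `E_r = Σ_{i_1+⋯+i_n=r} x_1^{i_1}⋯x_n^{i_n} ∂_1^{[i_1]}⋯∂_n^{[i_n]}`
on `K[x_1,…,x_n]`. -/
noncomputable def eulerOp (K : Type*) [CommRing K] (n : ℕ) (r : ℕ) :
    MvPolynomial (Fin n) K →ₗ[K] MvPolynomial (Fin n) K :=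
  ∑ c ∈ Finset.Nat.antidiagonalTuple n r,
    LinearMap.mulLeft K (MvPolynomial.monomial (Finsupp.equivFunOnFinite.symm c) (1 : K)) ∘ₗ
      ((List.finRange n).map fun i => dpDeriv K i (c i)).prod

open MvPolynomial in
theorem dpDeriv_monomial (K : Type*) [CommRing K] {n : ℕ} (i : Fin n) (j : ℕ)
    (a : Fin n →₀ ℕ) (k : K) :
    dpDeriv K i j (monomial a k) = ((a i).choose j : K) • monomial (a - Finsupp.single i j) k := by
  show (Finsupp.lsum K (fun a : Fin n →₀ ℕ => (((a i).choose j : K)) •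
    (monomial (a - Finsupp.single i j) : K →ₗ[K] MvPolynomial (Fin n) K))) (Finsupp.single a k) = _
  rw [Finsupp.lsum_single]
  rfl

open MvPolynomial in
theorem prod_dpDeriv (K : Type*) [CommRing K] {n : ℕ} (c : Fin n → ℕ)
    (l : List (Fin n)) (hl : l.Nodup) (a : Fin n →₀ ℕ) (k : K) :
    ((l.map fun i => dpDeriv K i (c i)).prod) (monomial a k) =
      ((∏ i ∈ l.toFinset, (a i).choose (c i) : ℕ) : K) •
        monomial (a - ∑ i ∈ l.toFinset, Finsupp.single i (c i)) k := by
  induction l with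
  | nil => simp
  | cons i t ih =>
    rw [List.nodup_cons] at hl
    obtain ⟨hi, ht⟩ := hl
    have hit : i ∉ t.toFinset := by simpa using hi
    rw [List.map_cons, List.prod_cons, Module.End.mul_apply, ih ht, map_smul,
      dpDeriv_monomial]
    have hs : (a - ∑ j ∈ t.toFinset, Finsupp.single j (c j)) i = a i := by
      rw [Finsupp.tsub_apply, Finsupp.finset_sum_apply]
      rw [Finset.sum_eq_zero (fun j hj => Finsupp.single_eq_of_ne (by rintro rfl; exact hit hj))]
      simp
    rw [hs, List.toFinset_cons, Finset.prod_insert hit, Finset.sum_insert hit]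
    rw [smul_smul, Nat.cast_mul]
    congr 1
    · ring
    · rw [tsub_tsub, add_comm]

theorem vandermonde_pi {ι : Type*} [DecidableEq ι] (s : Finset ι) (a : ι → ℕ) (r : ℕ) :
    ∑ c ∈ s.piAntidiag r, ∏ i ∈ s, (a i).choose (c i) = (∑ i ∈ s, a i).choose r := by
  induction s using Finset.cons_induction generalizing r with
  | empty =>
    rcases Nat.eq_zero_or_pos r with rfl | hr
    · simp
    · rw [Finset.piAntidiag_empty_of_ne_zero hr.ne']
      simp [Nat.choose_eq_zero_of_lt hr]
  | cons i t hi ih =>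
    rw [Finset.piAntidiag_cons hi, Finset.sum_disjiUnion, Finset.sum_cons,
      Nat.add_choose_eq]
    refine Finset.sum_congr rfl fun p hp => ?_
    rw [Finset.sum_map]
    rw [← ih p.2, Finset.mul_sum]
    refine Finset.sum_congr rfl fun g hg => ?_
    rw [Finset.mem_piAntidiag] at hg
    have hgi : g i = 0 := by
      by_contra h
      exact hi (hg.2 i h)
    rw [Finset.prod_cons]
    simp only [addRightEmbedding_apply]
    congr 1
    · simp [hgi]
    · refine Finset.prod_congr rfl fun j hj => ?_
      have : j ≠ i := by rintro rfl; exact hi hj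
      simp [this]

open MvPolynomial in
theorem eulerOp_monomial (K : Type*) [CommRing K] {n : ℕ} (r : ℕ)
    (a : Fin n →₀ ℕ) (k : K) :
    eulerOp K n r (monomial a k) = (((∑ i, a i).choose r : ℕ) : K) • monomial a k := by
  have hsym : ∀ c : Fin n → ℕ,
      (Finsupp.equivFunOnFinite.symm c : Fin n →₀ ℕ) = ∑ i, Finsupp.single i (c i) := by
    intro c
    ext j
    rw [Finsupp.finset_sum_apply]
    simp [Finsupp.single_apply, Finset.sum_ite_eq' Finset.univ j]
  rw [eulerOp, LinearMap.sum_apply]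
  have key : ∀ c ∈ Finset.Nat.antidiagonalTuple n r,
      (LinearMap.mulLeft K (monomial (Finsupp.equivFunOnFinite.symm c) (1 : K)) ∘ₗ
        ((List.finRange n).map fun i => dpDeriv K i (c i)).prod) (monomial a k) =
      ((∏ i, (a i).choose (c i) : ℕ) : K) • monomial a k := by
    intro c _
    rw [LinearMap.comp_apply, prod_dpDeriv K c _ (List.nodup_finRange n), map_smul,
      LinearMap.mulLeft_apply, List.toFinset_finRange]
    by_cases hle : (Finsupp.equivFunOnFinite.symm c : Fin n →₀ ℕ) ≤ a
    · congr 1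
      rw [← hsym, monomial_mul, one_mul, add_tsub_cancel_of_le hle]
    · have : ∃ i, a i < c i := by
        by_contra h
        push_neg at h
        exact hle fun i => by simpa using h i
      obtain ⟨i, hi⟩ := this
      have hz : (∏ i, (a i).choose (c i)) = 0 :=
        Finset.prod_eq_zero (Finset.mem_univ i) (Nat.choose_eq_zero_of_lt hi)
      rw [hz]
      simp
  rw [Finset.sum_congr rfl key, ← Finset.sum_smul, ← Nat.cast_sum]
  congr 2
  rw [← Finset.piAntidiag_univ_fin_eq_antidiagonalTuple, vandermonde_pi]


theorem euler_nat_id (d r : ℕ) :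
    d * d.choose r = (r + 1) * d.choose (r + 1) + r * d.choose r := by
  rcases le_or_gt r d with h | h
  · obtain ⟨e, rfl⟩ : ∃ e, d = e + r := ⟨d - r, (Nat.sub_add_cancel h).symm⟩
    have h1 : (e + r).choose (r + 1) * (r + 1) = (e + r).choose r * e := by
      simpa using Nat.choose_succ_right_eq (e + r) r
    calc (e + r) * (e + r).choose r
        = (e + r).choose r * e + r * (e + r).choose r := by ring
      _ = (r + 1) * (e + r).choose (r + 1) + r * (e + r).choose r := by
          rw [← h1]; ring
  · rw [Nat.choose_eq_zero_of_lt h, Nat.choose_eq_zero_of_lt (h.trans r.lt_succ_self)]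
    simp


/-- For every `r ≥ 1`, the Euler operators satisfy
`E_1 ∘ E_r = (r+1)·E_{r+1} + r·E_r` as `K`-linear endomorphisms of `K[x_1,…,x_n]`. -/
theorem eulerOp_one_comp (K : Type*) [Field K] (n : ℕ) (r : ℕ) (hr : 1 ≤ r) :
    eulerOp K n 1 ∘ₗ eulerOp K n r =
      (((r + 1 : ℕ)) : K) • eulerOp K n (r + 1) + ((r : ℕ) : K) • eulerOp K n r := by
  apply LinearMap.ext
  intro p
  induction p using MvPolynomial.induction_on' with
  | add p q hp hq => simp only [map_add, LinearMap.add_apply, LinearMap.smul_apply,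
      LinearMap.comp_apply] at hp hq ⊢; rw [hp, hq]
  | monomial a k =>
    rw [LinearMap.comp_apply, eulerOp_monomial, map_smul, eulerOp_monomial, smul_smul,
      LinearMap.add_apply, LinearMap.smul_apply, LinearMap.smul_apply,
      eulerOp_monomial, eulerOp_monomial, smul_smul, smul_smul, ← add_smul]
    congr 1
    have hnat : (∑ i, a i).choose r * (∑ i, a i).choose 1 =
        (r + 1) * (∑ i, a i).choose (r + 1) + r * (∑ i, a i).choose r := by
      rw [Nat.choose_one_right, mul_comm]
      exact euler_nat_id _ r
    exact_mod_cast congrArg (Nat.cast : ℕ → K) hnat
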